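/- Let u and u' be symplectic transformations of E with the same minimal polynomial d = d₁·d₂, where d₁, d₂ ∈ K[X] are coprime and reverse(dᵢ) = cᵢ • dᵢ for nonzero cᵢ ∈ K (i = 1,2), and suppose ker d₁(u) = ker d₁(u') = E₁ and ker d₂(u) = ker d₂(u') = E₂. Then there exists a symplectic transformation w of E with u' = w ∘ u ∘ w⁻¹ if and only if for each i ∈ {1,2} there exists a K-linear automorphism wᵢ of Eᵢ preserving the restriction of ⟨·,·⟩ to Eᵢ such that the restriction of u' to Eᵢ equals wᵢ ∘ (restriction of u to Eᵢ) ∘ wᵢ⁻¹. -/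

import Mathlib

open Polynomial

section aux
variable {K E : Type*} [Field K] [AddCommGroup E] [Module K E]

lemma pow_mul_pow_symm (u : E ≃ₗ[K] E) (i : ℕ) :
    (u : Module.End K E) ^ i * (u.symm : Module.End K E) ^ i = 1 := by
  have hUV : (u : Module.End K E) * (u.symm : Module.End K E) = 1 := by
    ext x; simp [Module.End.mul_apply]
  have hVU : (u.symm : Module.End K E) * (u : Module.End K E) = 1 := by
    ext x; simp [Module.End.mul_apply]
  have hc : Commute (u : Module.End K E) (u.symm : Module.End K E) := by
    unfold Commute SemiconjBy; rw [hUV, hVU]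
  rw [← hc.mul_pow, hUV, one_pow]

lemma aeval_reverse (u : E ≃ₗ[K] E) (f : K[X]) :
    aeval (u : Module.End K E) f.reverse =
      (u : Module.End K E) ^ f.natDegree * aeval (u.symm : Module.End K E) f := by
  set U := (u : Module.End K E)
  set V := (u.symm : Module.End K E)
  set n := f.natDegree
  have h1 : f.reverse.natDegree < n + 1 := Nat.lt_succ_of_le f.reverse_natDegree_le
  have h2 : f.natDegree < n + 1 := Nat.lt_succ_self n
  rw [aeval_eq_sum_range' h1, aeval_eq_sum_range' h2, Finset.mul_sum]
  have key : ∀ i ∈ Finset.range (n+1), f.reverse.coeff i • U ^ i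
      = (fun i => f.coeff i • (U ^ n * V ^ i)) (n - i) := by
    intro i hi
    have hi' : i ≤ n := Nat.lt_succ_iff.mp (Finset.mem_range.mp hi)
    simp only [reverse, coeff_reflect, revAt_le hi']
    have : U ^ n * V ^ (n - i) = U ^ i := by
      have : U ^ n = U ^ i * U ^ (n - i) := by rw [← pow_add, Nat.add_sub_cancel' hi']
      rw [this, mul_assoc, pow_mul_pow_symm, mul_one]
    rw [this]
    rw [show revAt f.natDegree i = n - i from revAt_le hi']
  rw [Finset.sum_congr rfl key]
  have := Finset.sum_range_reflect (fun i => f.coeff i • (U ^ n * V ^ i)) (n+1)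
  simp only [Nat.add_sub_cancel] at this
  rw [this]
  exact Finset.sum_congr rfl fun i _ => (mul_smul_comm _ _ _).symm

lemma conj_aeval (u u' w : E ≃ₗ[K] E) (h : ∀ z, u' (w z) = w (u z)) (p : K[X]) (x : E) :
    aeval (u' : Module.End K E) p (w x) = w (aeval (u : Module.End K E) p x) := by
  have hpow : ∀ (n : ℕ) (x : E),
      ((u' : Module.End K E) ^ n) (w x) = w (((u : Module.End K E) ^ n) x) := by
    intro n
    induction n with
    | zero => simp
    | succ n ih =>
      intro x
      simp only [pow_succ, Module.End.mul_apply, LinearEquiv.coe_coe, h, ih]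
  induction p using Polynomial.induction_on' with
  | add p q hp hq => simp [hp, hq]
  | monomial n a =>
    simp only [aeval_monomial, Module.End.mul_apply, Module.algebraMap_end_apply,
      LinearMap.smul_apply, hpow, map_smul]

lemma adjoint_aeval (Bf : E →ₗ[K] E →ₗ[K] K) (u : E ≃ₗ[K] E)
    (hu : ∀ x y, Bf (u x) (u y) = Bf x y) (p : K[X]) (x y : E) :
    Bf (aeval (u : Module.End K E) p x) y = Bf x (aeval (u.symm : Module.End K E) p y) := by
  have h1 : ∀ x y, Bf (u x) y = Bf x (u.symm y) := by
    intro x y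
    conv_rhs => rw [← hu x (u.symm y), u.apply_symm_apply]
  have hpow : ∀ (n : ℕ) (x y : E),
      Bf (((u : Module.End K E) ^ n) x) y = Bf x (((u.symm : Module.End K E) ^ n) y) := by
    intro n
    induction n with
    | zero => simp
    | succ n ih =>
      intro x y
      have e1 : ((u : Module.End K E) ^ (n+1)) x = ((u : Module.End K E) ^ n) (u x) := by
        rw [pow_succ]; rfl
      have e2 : ((u.symm : Module.End K E) ^ (n+1)) y
          = u.symm (((u.symm : Module.End K E) ^ n) y) := by
        rw [pow_succ']; rfl
      rw [e1, e2, ih (u x) y, h1]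
  induction p using Polynomial.induction_on' with
  | add p q hp hq => simp [hp, hq]
  | monomial n a =>
    simp only [aeval_monomial, Module.End.mul_apply, Module.algebraMap_end_apply,
      LinearMap.smul_apply, map_smul, hpow, LinearMap.smul_apply, LinearMap.map_smul₂]

lemma ker_symm_aeval (u : E ≃ₗ[K] E) (f : K[X]) (c : K) (hc : c ≠ 0)
    (hrev : f.reverse = c • f) (x : E) (hx : aeval (u : Module.End K E) f x = 0) :
    aeval (u.symm : Module.End K E) f x = 0 := by
  have h := congrArg (fun p => aeval (u : Module.End K E) p x) hrev
  simp only [aeval_reverse, map_smul] at h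
  rw [Module.End.mul_apply] at h
  simp only [LinearMap.smul_apply, hx, smul_zero] at h
  have hinj : Function.Injective ⇑((u : Module.End K E) ^ f.natDegree) := by
    intro a b hab
    apply Function.Injective.iterate u.injective f.natDegree
    simpa only [Module.End.pow_apply, LinearEquiv.coe_coe] using hab
  exact hinj (by rw [h]; simp)

end aux

/-- Two symplectic transformations `u`, `u'` with the same minimal polynomial `d₁ * d₂`
(`d₁, d₂` coprime, `reverse dᵢ = cᵢ • dᵢ`) and the same subspaces `E₁ = ker d₁`, `E₂ = ker d₂`
are conjugate by a symplectic transformation of `E` iff for each `i` the restrictions of `u` and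
`u'` to `Eᵢ` are conjugate by an automorphism of `Eᵢ` preserving the restricted form. -/
theorem stmt_7 {K E : Type*} [Field K] (hchar : (2 : K) ≠ 0)
    [AddCommGroup E] [Module K E] [FiniteDimensional K E]
    (B : E →ₗ[K] E →ₗ[K] K) (halt : ∀ x, B x x = 0)
    (hnd : ∀ x, (∀ y, B x y = 0) → x = 0)
    (u u' : E ≃ₗ[K] E)
    (hu : ∀ x y, B (u x) (u y) = B x y) (hu' : ∀ x y, B (u' x) (u' y) = B x y)
    (d₁ d₂ : K[X]) (hcop : IsCoprime d₁ d₂)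
    (c₁ c₂ : K) (hc₁ : c₁ ≠ 0) (hc₂ : c₂ ≠ 0)
    (hrev₁ : d₁.reverse = c₁ • d₁) (hrev₂ : d₂.reverse = c₂ • d₂)
    (hmin : minpoly K (u : Module.End K E) = d₁ * d₂)
    (hmin' : minpoly K (u' : Module.End K E) = d₁ * d₂)
    (E₁ E₂ : Submodule K E)
    (hE₁ : E₁ = LinearMap.ker (aeval (u : Module.End K E) d₁))
    (hE₁' : E₁ = LinearMap.ker (aeval (u' : Module.End K E) d₁))
    (hE₂ : E₂ = LinearMap.ker (aeval (u : Module.End K E) d₂))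
    (hE₂' : E₂ = LinearMap.ker (aeval (u' : Module.End K E) d₂))
    (hu₁ : ∀ x ∈ E₁, (u : E →ₗ[K] E) x ∈ E₁) (hu₂ : ∀ x ∈ E₂, (u : E →ₗ[K] E) x ∈ E₂) :
    (∃ w : E ≃ₗ[K] E, (∀ x y, B (w x) (w y) = B x y) ∧ ∀ x, u' x = w (u (w.symm x))) ↔
      ((∃ w₁ : E₁ ≃ₗ[K] E₁, (∀ x y : E₁, B (w₁ x : E) (w₁ y : E) = B (x : E) (y : E)) ∧
          ∀ x : E₁, u' (x : E) = (w₁ (((u : E →ₗ[K] E).restrict hu₁) (w₁.symm x)) : E)) ∧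
       (∃ w₂ : E₂ ≃ₗ[K] E₂, (∀ x y : E₂, B (w₂ x : E) (w₂ y : E) = B (x : E) (y : E)) ∧
          ∀ x : E₂, u' (x : E) = (w₂ (((u : E →ₗ[K] E).restrict hu₂) (w₂.symm x)) : E))) := by
  obtain ⟨a, b, hab⟩ := hcop
  have hdd : aeval (u : Module.End K E) (d₁ * d₂) = 0 := by
    rw [← hmin]; exact minpoly.aeval K _
  set P₁ := aeval (u : Module.End K E) (b * d₂) with hP₁def
  set P₂ := aeval (u : Module.End K E) (a * d₁) with hP₂def
  have hsum : ∀ x, P₁ x + P₂ x = x := by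
    intro x
    have h : P₁ + P₂ = 1 := by
      rw [hP₁def, hP₂def, ← map_add, add_comm (b * d₂), hab, map_one]
    calc P₁ x + P₂ x = (P₁ + P₂) x := rfl
    _ = x := by rw [h]; rfl
  have hP₁mem : ∀ x, P₁ x ∈ E₁ := by
    intro x
    rw [hE₁, LinearMap.mem_ker]
    have h : (aeval (u : Module.End K E) d₁) (P₁ x)
        = (aeval (u : Module.End K E) (b * (d₁ * d₂))) x := by
      rw [show b * (d₁ * d₂) = d₁ * (b * d₂) by ring, map_mul, Module.End.mul_apply]
    rw [h, map_mul, Module.End.mul_apply, hdd, LinearMap.zero_apply, map_zero]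
  have hP₂mem : ∀ x, P₂ x ∈ E₂ := by
    intro x
    rw [hE₂, LinearMap.mem_ker]
    have h : (aeval (u : Module.End K E) d₂) (P₂ x)
        = (aeval (u : Module.End K E) (a * (d₁ * d₂))) x := by
      rw [show a * (d₁ * d₂) = d₂ * (a * d₁) by ring, map_mul, Module.End.mul_apply]
    rw [h, map_mul, Module.End.mul_apply, hdd, LinearMap.zero_apply, map_zero]
  have hP₂onE₁ : ∀ x ∈ E₁, P₂ x = 0 := by
    intro x hx
    rw [hE₁, LinearMap.mem_ker] at hx
    rw [hP₂def, map_mul, Module.End.mul_apply, hx, map_zero]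
  have hP₁onE₂ : ∀ x ∈ E₂, P₁ x = 0 := by
    intro x hx
    rw [hE₂, LinearMap.mem_ker] at hx
    rw [hP₁def, map_mul, Module.End.mul_apply, hx, map_zero]
  have hP₁onE₁ : ∀ x ∈ E₁, P₁ x = x := by
    intro x hx
    have := hsum x
    rw [hP₂onE₁ x hx, add_zero] at this
    exact this
  have hP₂onE₂ : ∀ x ∈ E₂, P₂ x = x := by
    intro x hx
    have := hsum x
    rw [hP₁onE₂ x hx, zero_add] at this
    exact this
  -- orthogonality of E₁ and E₂
  have horth : ∀ x ∈ E₁, ∀ y ∈ E₂, B x y = 0 := by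
    intro x hx y hy
    have hx' : B x y = B (P₁ x) y := by rw [hP₁onE₁ x hx]
    rw [hx', hP₁def, adjoint_aeval B u hu (b * d₂) x y, map_mul, Module.End.mul_apply]
    have hy0 : aeval (u.symm : Module.End K E) d₂ y = 0 := by
      apply ker_symm_aeval u d₂ c₂ hc₂ hrev₂
      rw [hE₂, LinearMap.mem_ker] at hy
      exact hy
    rw [hy0, map_zero, map_zero]
  have hskew : ∀ x y, B x y = - B y x := by
    intro x y
    have h := halt (x + y)
    simp only [map_add, LinearMap.add_apply, halt] at h
    linear_combination h
  have horth' : ∀ x ∈ E₂, ∀ y ∈ E₁, B x y = 0 := by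
    intro x hx y hy
    rw [hskew, horth y hy x hx, neg_zero]
  constructor
  · -- forward direction
    rintro ⟨w, hwB, hwconj⟩
    have hcomm : ∀ z, u' (w z) = w (u z) := by
      intro z
      rw [hwconj (w z), w.symm_apply_apply]
    have hcomm' : ∀ z, u (w.symm z) = w.symm (u' z) := by
      intro z
      rw [hwconj z, w.symm_apply_apply]
    have hkey : ∀ (p : K[X]) (x : E), aeval (u' : Module.End K E) p (w x)
        = w (aeval (u : Module.End K E) p x) := conj_aeval u u' w hcomm
    have hkey' : ∀ (p : K[X]) (x : E), aeval (u : Module.End K E) p (w.symm x)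
        = w.symm (aeval (u' : Module.End K E) p x) := conj_aeval u' u w.symm hcomm'
    have hmap₁ : E₁.map (w : E →ₗ[K] E) = E₁ := by
      apply le_antisymm
      · rintro _ ⟨x, hx, rfl⟩
        simp only [hE₁, SetLike.mem_coe, LinearMap.mem_ker] at hx
        simp only [hE₁', SetLike.mem_coe, LinearMap.mem_ker]
        show aeval (u' : Module.End K E) d₁ (w x) = 0
        rw [hkey d₁ x, hx, map_zero]
      · intro x hx
        refine ⟨w.symm x, ?_, w.apply_symm_apply x⟩
        simp only [hE₁', SetLike.mem_coe, LinearMap.mem_ker] at hx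
        simp only [hE₁, SetLike.mem_coe, LinearMap.mem_ker]
        rw [hkey' d₁ x, hx, map_zero]
    have hmap₂ : E₂.map (w : E →ₗ[K] E) = E₂ := by
      apply le_antisymm
      · rintro _ ⟨x, hx, rfl⟩
        simp only [hE₂, SetLike.mem_coe, LinearMap.mem_ker] at hx
        simp only [hE₂', SetLike.mem_coe, LinearMap.mem_ker]
        show aeval (u' : Module.End K E) d₂ (w x) = 0
        rw [hkey d₂ x, hx, map_zero]
      · intro x hx
        refine ⟨w.symm x, ?_, w.apply_symm_apply x⟩
        simp only [hE₂', SetLike.mem_coe, LinearMap.mem_ker] at hx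
        simp only [hE₂, SetLike.mem_coe, LinearMap.mem_ker]
        rw [hkey' d₂ x, hx, map_zero]
    refine ⟨⟨w.ofSubmodules E₁ E₁ hmap₁, ?_, ?_⟩, ⟨w.ofSubmodules E₂ E₂ hmap₂, ?_, ?_⟩⟩
    · intro x y
      exact hwB x y
    · intro x
      exact hwconj (x : E)
    · intro x y
      exact hwB x y
    · intro x
      exact hwconj (x : E)
  · -- backward direction
    rintro ⟨⟨w₁, hw₁B, hw₁c⟩, ⟨w₂, hw₂B, hw₂c⟩⟩
    set W : E →ₗ[K] E :=
      E₁.subtype ∘ₗ (w₁ : E₁ →ₗ[K] E₁) ∘ₗ LinearMap.codRestrict E₁ P₁ hP₁mem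
        + E₂.subtype ∘ₗ (w₂ : E₂ →ₗ[K] E₂) ∘ₗ LinearMap.codRestrict E₂ P₂ hP₂mem with hWdef
    set W' : E →ₗ[K] E :=
      E₁.subtype ∘ₗ (w₁.symm : E₁ →ₗ[K] E₁) ∘ₗ LinearMap.codRestrict E₁ P₁ hP₁mem
        + E₂.subtype ∘ₗ (w₂.symm : E₂ →ₗ[K] E₂) ∘ₗ LinearMap.codRestrict E₂ P₂ hP₂mem
      with hW'def
    have hWx : ∀ x, W x = ↑(w₁ ⟨P₁ x, hP₁mem x⟩) + ↑(w₂ ⟨P₂ x, hP₂mem x⟩) := fun _ => rfl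
    have hW'x : ∀ x, W' x = ↑(w₁.symm ⟨P₁ x, hP₁mem x⟩) + ↑(w₂.symm ⟨P₂ x, hP₂mem x⟩) :=
      fun _ => rfl
    have hP₁W : ∀ (z₁ : E₁) (z₂ : E₂), P₁ (↑z₁ + ↑z₂) = ↑z₁ := by
      intro z₁ z₂; rw [map_add, hP₁onE₁ _ z₁.2, hP₁onE₂ _ z₂.2, add_zero]
    have hP₂W : ∀ (z₁ : E₁) (z₂ : E₂), P₂ (↑z₁ + ↑z₂) = ↑z₂ := by
      intro z₁ z₂; rw [map_add, hP₂onE₁ _ z₁.2, hP₂onE₂ _ z₂.2, zero_add]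
    have hWW' : ∀ x, W (W' x) = x := by
      intro x
      rw [hW'x x, hWx]
      have e1 : (⟨P₁ (↑(w₁.symm ⟨P₁ x, hP₁mem x⟩) + ↑(w₂.symm ⟨P₂ x, hP₂mem x⟩)),
          hP₁mem _⟩ : E₁) = w₁.symm ⟨P₁ x, hP₁mem x⟩ := Subtype.ext (hP₁W _ _)
      have e2 : (⟨P₂ (↑(w₁.symm ⟨P₁ x, hP₁mem x⟩) + ↑(w₂.symm ⟨P₂ x, hP₂mem x⟩)),
          hP₂mem _⟩ : E₂) = w₂.symm ⟨P₂ x, hP₂mem x⟩ := Subtype.ext (hP₂W _ _)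
      rw [e1, e2, w₁.apply_symm_apply, w₂.apply_symm_apply]
      exact hsum x
    have hW'W : ∀ x, W' (W x) = x := by
      intro x
      rw [hWx x, hW'x]
      have e1 : (⟨P₁ (↑(w₁ ⟨P₁ x, hP₁mem x⟩) + ↑(w₂ ⟨P₂ x, hP₂mem x⟩)),
          hP₁mem _⟩ : E₁) = w₁ ⟨P₁ x, hP₁mem x⟩ := Subtype.ext (hP₁W _ _)
      have e2 : (⟨P₂ (↑(w₁ ⟨P₁ x, hP₁mem x⟩) + ↑(w₂ ⟨P₂ x, hP₂mem x⟩)),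
          hP₂mem _⟩ : E₂) = w₂ ⟨P₂ x, hP₂mem x⟩ := Subtype.ext (hP₂W _ _)
      rw [e1, e2, w₁.symm_apply_apply, w₂.symm_apply_apply]
      exact hsum x
    have hBsplit : ∀ (z₁ : E₁) (z₂ : E₂) (t₁ : E₁) (t₂ : E₂),
        B (↑z₁ + ↑z₂) (↑t₁ + ↑t₂) = B ↑z₁ ↑t₁ + B ↑z₂ ↑t₂ := by
      intro z₁ z₂ t₁ t₂
      simp only [map_add, LinearMap.add_apply]
      rw [horth _ z₁.2 _ t₂.2, horth' _ z₂.2 _ t₁.2]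
      ring
    refine ⟨LinearEquiv.ofLinear W W' (LinearMap.ext hWW') (LinearMap.ext hW'W), ?_, ?_⟩
    · intro x y
      show B (W x) (W y) = B x y
      rw [hWx x, hWx y, hBsplit, hw₁B, hw₂B]
      have : B ((⟨P₁ x, hP₁mem x⟩ : E₁) : E) ((⟨P₁ y, hP₁mem y⟩ : E₁) : E)
          + B ((⟨P₂ x, hP₂mem x⟩ : E₂) : E) ((⟨P₂ y, hP₂mem y⟩ : E₂) : E)
          = B (P₁ x + P₂ x) (P₁ y + P₂ y) := by
        rw [hBsplit ⟨P₁ x, hP₁mem x⟩ ⟨P₂ x, hP₂mem x⟩ ⟨P₁ y, hP₁mem y⟩ ⟨P₂ y, hP₂mem y⟩]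
      rw [this, hsum x, hsum y]
    · intro x
      have hcommP₁ : ∀ z, P₁ ((u : E →ₗ[K] E) z) = (u : E →ₗ[K] E) (P₁ z) := by
        intro z
        have h1 : aeval (u : Module.End K E) ((b * d₂) * X) z = P₁ ((u : E →ₗ[K] E) z) := by
          rw [map_mul, aeval_X]; rfl
        have h2 : aeval (u : Module.End K E) (X * (b * d₂)) z = (u : E →ₗ[K] E) (P₁ z) := by
          rw [map_mul, aeval_X]; rfl
        rw [← h1, ← h2, mul_comm]
      have hcommP₂ : ∀ z, P₂ ((u : E →ₗ[K] E) z) = (u : E →ₗ[K] E) (P₂ z) := by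
        intro z
        have h1 : aeval (u : Module.End K E) ((a * d₁) * X) z = P₂ ((u : E →ₗ[K] E) z) := by
          rw [map_mul, aeval_X]; rfl
        have h2 : aeval (u : Module.End K E) (X * (a * d₁)) z = (u : E →ₗ[K] E) (P₂ z) := by
          rw [map_mul, aeval_X]; rfl
        rw [← h1, ← h2, mul_comm]
      show u' x = W ((u : E →ₗ[K] E) (W' x))
      rw [hW'x x]
      have ht : (u : E →ₗ[K] E) (↑(w₁.symm ⟨P₁ x, hP₁mem x⟩) + ↑(w₂.symm ⟨P₂ x, hP₂mem x⟩))
          = ↑((u : E →ₗ[K] E).restrict hu₁ (w₁.symm ⟨P₁ x, hP₁mem x⟩))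
            + ↑((u : E →ₗ[K] E).restrict hu₂ (w₂.symm ⟨P₂ x, hP₂mem x⟩)) := by
        rw [map_add]; rfl
      rw [ht, hWx]
      have e1 : (⟨P₁ (↑((u : E →ₗ[K] E).restrict hu₁ (w₁.symm ⟨P₁ x, hP₁mem x⟩))
            + ↑((u : E →ₗ[K] E).restrict hu₂ (w₂.symm ⟨P₂ x, hP₂mem x⟩))), hP₁mem _⟩ : E₁)
          = (u : E →ₗ[K] E).restrict hu₁ (w₁.symm ⟨P₁ x, hP₁mem x⟩) := Subtype.ext (hP₁W _ _)
      have e2 : (⟨P₂ (↑((u : E →ₗ[K] E).restrict hu₁ (w₁.symm ⟨P₁ x, hP₁mem x⟩))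
            + ↑((u : E →ₗ[K] E).restrict hu₂ (w₂.symm ⟨P₂ x, hP₂mem x⟩))), hP₂mem _⟩ : E₂)
          = (u : E →ₗ[K] E).restrict hu₂ (w₂.symm ⟨P₂ x, hP₂mem x⟩) := Subtype.ext (hP₂W _ _)
      rw [e1, e2, ← hw₁c ⟨P₁ x, hP₁mem x⟩, ← hw₂c ⟨P₂ x, hP₂mem x⟩]
      show u' x = u' (P₁ x) + u' (P₂ x)
      rw [← map_add, hsum]
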